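/- Chernoff-type tail bound for the energy distribution of a coherent thermal state: with M(t) as its moment-generating function and t' = log(1 + 1/(α + n_β)), one has Σ_{l ≥ T} ρ_{l,l} ≤ e^{-t'T} M(t') = ((α+n_β)/α) exp[α - T log(1 + 1/(α+n_β))]; in particular, for T = α² + R√(1+2n_β)α and α → ∞ the right tail weight is O(exp(n_β + 1/2 - √(1+2n_β)·R)). -/

import Mathlib

set_option maxHeartbeats 1000000


open Filter Real Topology

/-- The `l`-th (ordinary) Laguerre polynomial `L_l(z) = Σ_{i=0}^l (-1)^i C(l,l-i) z^i/i!`. -/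
noncomputable def laguerre (l : ℕ) (z : ℝ) : ℝ :=
  ∑ i ∈ Finset.range (l + 1), (-1 : ℝ) ^ i * (l.choose (l - i)) * z ^ i / (Nat.factorial i : ℝ)

/-- Diagonal Fock-basis matrix element `ρ_{l,l}` of the coherent thermal state with real
displacement `α` and mean thermal occupation `n_β`. -/
noncomputable def rhoDiag (nβ α : ℝ) (l : ℕ) : ℝ :=
  Real.exp (-α ^ 2 / (nβ + 1)) / (nβ + 1) * (nβ / (nβ + 1)) ^ l *
    laguerre l (-α ^ 2 / (nβ * (nβ + 1)))

/-- Chernoff-type tail bound for the energy distribution of a coherent thermal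
state: with `t' = log(1 + 1/(α+n_β))`,
`Σ_{l≥T} ρ_{l,l} ≤ e^{-t'T} M(t') = ((α+n_β)/α) exp[α - T log(1+1/(α+n_β))]`; in particular for
`T = α² + R√(1+2n_β)α` the right tail weight is `O(exp(n_β + 1/2 - √(1+2n_β)R))` as `α → ∞`. -/
lemma rhoDiag_nonneg (nβ α : ℝ) (hn : 0 < nβ) (l : ℕ) : 0 ≤ rhoDiag nβ α l := by
  have hn1 : (0:ℝ) < nβ + 1 := by linarith
  unfold rhoDiag laguerre
  apply mul_nonneg (by positivity)
  apply Finset.sum_nonneg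
  intro i hi
  have h : (-1 : ℝ) ^ i * (-α ^ 2 / (nβ * (nβ + 1))) ^ i = (α ^ 2 / (nβ * (nβ + 1))) ^ i := by
    rw [← mul_pow]; congr 1; field_simp
  calc (0:ℝ) ≤ (l.choose (l - i) : ℝ) * (α ^ 2 / (nβ * (nβ + 1))) ^ i / (Nat.factorial i : ℝ) := by
        positivity
    _ = (-1 : ℝ) ^ i * (l.choose (l - i)) * (-α ^ 2 / (nβ * (nβ + 1))) ^ i / (Nat.factorial i : ℝ) := by
        rw [mul_comm ((-1:ℝ)^i) _, mul_assoc, h]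

/-- Abstract generating function for Laguerre-type sums. -/
lemma gen_hasSum {c0 w s : ℝ} (hc0 : 0 ≤ c0) (hw : 0 ≤ w) (hs0 : 0 ≤ s) (hslt : s < 1) :
    HasSum (fun l : ℕ => c0 * s ^ l *
        ∑ i ∈ Finset.range (l + 1), (l.choose (l - i) : ℝ) * w ^ i / (Nat.factorial i : ℝ))
      ((c0 / (1 - s)) * Real.exp (w * s / (1 - s))) := by
  have hsne : (1:ℝ) - s ≠ 0 := by intro h; nlinarith
  have hnorm : ‖s‖ < 1 := by rw [Real.norm_eq_abs, abs_of_nonneg hs0]; exact hslt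
  have hFnonneg : ∀ p : ℕ × ℕ, 0 ≤ c0 * ((p.1 + p.2).choose p.1 : ℝ) *
      (w ^ p.1 / (Nat.factorial p.1 : ℝ)) * s ^ (p.1 + p.2) := fun p => by positivity
  have hfib : ∀ i : ℕ, HasSum
      (fun k => c0 * ((i + k).choose i : ℝ) * (w ^ i / (Nat.factorial i : ℝ)) * s ^ (i + k))
      ((c0 / (1 - s)) * ((w * s / (1 - s)) ^ i / (Nat.factorial i : ℝ))) := by
    intro i
    have h := (hasSum_choose_mul_geometric_of_norm_lt_one (𝕜 := ℝ) i hnorm).mul_left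
      (c0 * (w ^ i / (Nat.factorial i : ℝ)) * s ^ i)
    have hfeq : (fun k => c0 * (w ^ i / (Nat.factorial i : ℝ)) * s ^ i *
        (((k + i).choose i : ℝ) * s ^ k)) =
        fun k => c0 * ((i + k).choose i : ℝ) * (w ^ i / (Nat.factorial i : ℝ)) * s ^ (i + k) := by
      funext k
      rw [add_comm i k, pow_add]; ring
    have hfi : (Nat.factorial i : ℝ) ≠ 0 := Nat.cast_ne_zero.mpr (Nat.factorial_ne_zero i)
    have hp : (1 - s) ^ (i + 1) ≠ 0 := pow_ne_zero _ hsne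
    have hveq : c0 * (w ^ i / (Nat.factorial i : ℝ)) * s ^ i * (1 / (1 - s) ^ (i + 1))
        = (c0 / (1 - s)) * ((w * s / (1 - s)) ^ i / (Nat.factorial i : ℝ)) := by
      rw [div_pow]
      field_simp
      ring
    rw [hfeq, hveq] at h
    exact h
  have hv : HasSum (fun i : ℕ => (c0 / (1 - s)) * ((w * s / (1 - s)) ^ i / (Nat.factorial i : ℝ)))
      ((c0 / (1 - s)) * Real.exp (w * s / (1 - s))) := by
    have h := NormedSpace.expSeries_div_hasSum_exp (w * s / (1 - s))
    rw [← Real.exp_eq_exp_ℝ] at h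
    exact h.mul_left _
  have hFsum : Summable (fun p : ℕ × ℕ => c0 * ((p.1 + p.2).choose p.1 : ℝ) *
      (w ^ p.1 / (Nat.factorial p.1 : ℝ)) * s ^ (p.1 + p.2)) := by
    rw [summable_prod_of_nonneg hFnonneg]
    exact ⟨fun i => (hfib i).summable, hv.summable.congr fun i => ((hfib i).tsum_eq).symm⟩
  have hFhas : HasSum (fun p : ℕ × ℕ => c0 * ((p.1 + p.2).choose p.1 : ℝ) *
      (w ^ p.1 / (Nat.factorial p.1 : ℝ)) * s ^ (p.1 + p.2))
      ((c0 / (1 - s)) * Real.exp (w * s / (1 - s))) := by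
    have h1 := hFsum.hasSum.prod_fiberwise hfib
    rw [hv.unique h1]
    exact hFsum.hasSum
  have hsig : HasSum (fun x : Σ n : ℕ, Finset.HasAntidiagonal.antidiagonal n =>
      c0 * (((x.2 : ℕ × ℕ).1 + (x.2 : ℕ × ℕ).2).choose (x.2 : ℕ × ℕ).1 : ℝ) *
      (w ^ (x.2 : ℕ × ℕ).1 / (Nat.factorial (x.2 : ℕ × ℕ).1 : ℝ)) *
      s ^ ((x.2 : ℕ × ℕ).1 + (x.2 : ℕ × ℕ).2))
      ((c0 / (1 - s)) * Real.exp (w * s / (1 - s))) :=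
    (Finset.HasAntidiagonal.sigmaAntidiagonalEquivProd.hasSum_iff).mpr hFhas
  have hdiag : HasSum (fun l : ℕ => ∑ p ∈ Finset.HasAntidiagonal.antidiagonal l,
      c0 * ((p.1 + p.2).choose p.1 : ℝ) * (w ^ p.1 / (Nat.factorial p.1 : ℝ)) * s ^ (p.1 + p.2))
      ((c0 / (1 - s)) * Real.exp (w * s / (1 - s))) := by
    have hfin : ∀ n : ℕ, HasSum
        (fun p : Finset.HasAntidiagonal.antidiagonal n =>
          c0 * (((p : ℕ × ℕ).1 + (p : ℕ × ℕ).2).choose (p : ℕ × ℕ).1 : ℝ) *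
          (w ^ (p : ℕ × ℕ).1 / (Nat.factorial (p : ℕ × ℕ).1 : ℝ)) *
          s ^ ((p : ℕ × ℕ).1 + (p : ℕ × ℕ).2))
        (∑ p ∈ Finset.HasAntidiagonal.antidiagonal n,
          c0 * ((p.1 + p.2).choose p.1 : ℝ) * (w ^ p.1 / (Nat.factorial p.1 : ℝ)) *
          s ^ (p.1 + p.2)) := by
      intro n
      rw [← Finset.sum_finset_coe]
      exact hasSum_fintype _
    exact hsig.sigma hfin
  have hfe : (fun l : ℕ => ∑ p ∈ Finset.HasAntidiagonal.antidiagonal l,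
      c0 * ((p.1 + p.2).choose p.1 : ℝ) * (w ^ p.1 / (Nat.factorial p.1 : ℝ)) * s ^ (p.1 + p.2))
      = fun l : ℕ => c0 * s ^ l *
        ∑ i ∈ Finset.range (l + 1), (l.choose (l - i) : ℝ) * w ^ i / (Nat.factorial i : ℝ) := by
    funext l
    rw [Finset.Nat.sum_antidiagonal_eq_sum_range_succ_mk, Finset.mul_sum]
    apply Finset.sum_congr rfl
    intro i hi
    have hil : i ≤ l := Nat.lt_succ_iff.mp (Finset.mem_range.mp hi)
    rw [Nat.add_sub_cancel' hil, Nat.choose_symm hil]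
    ring
  exact hfe ▸ hdiag

lemma hasSum_rho_mul (nβ α : ℝ) (hn : 0 < nβ) (hα : 0 < α) :
    HasSum (fun l : ℕ => rhoDiag nβ α l * (1 + 1 / (α + nβ)) ^ l)
      (((α + nβ) / α) * Real.exp α) := by
  have hn1 : (0:ℝ) < nβ + 1 := by linarith
  have han : (0:ℝ) < α + nβ := by linarith
  have hs0 : (0:ℝ) ≤ nβ / (nβ + 1) * (1 + 1 / (α + nβ)) := by positivity
  have hs1 : 1 - nβ / (nβ + 1) * (1 + 1 / (α + nβ)) = α / ((nβ + 1) * (α + nβ)) := by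
    field_simp; ring
  have hslt : nβ / (nβ + 1) * (1 + 1 / (α + nβ)) < 1 := by
    have h : (0:ℝ) < 1 - nβ / (nβ + 1) * (1 + 1 / (α + nβ)) := by rw [hs1]; positivity
    linarith
  have hc0 : (0:ℝ) ≤ Real.exp (-α ^ 2 / (nβ + 1)) / (nβ + 1) := by positivity
  have hw : (0:ℝ) ≤ α ^ 2 / (nβ * (nβ + 1)) := by positivity
  have h := gen_hasSum hc0 hw hs0 hslt
  have hfe : (fun l : ℕ => Real.exp (-α ^ 2 / (nβ + 1)) / (nβ + 1) *
        (nβ / (nβ + 1) * (1 + 1 / (α + nβ))) ^ l *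
        ∑ i ∈ Finset.range (l + 1),
          (l.choose (l - i) : ℝ) * (α ^ 2 / (nβ * (nβ + 1))) ^ i / (Nat.factorial i : ℝ))
      = fun l : ℕ => rhoDiag nβ α l * (1 + 1 / (α + nβ)) ^ l := by
    funext l
    unfold rhoDiag laguerre
    rw [mul_pow, Finset.sum_congr rfl (fun i _ => ?_)]
    · ring
    · show (l.choose (l - i) : ℝ) * (α ^ 2 / (nβ * (nβ + 1))) ^ i / (Nat.factorial i : ℝ)
        = (-1 : ℝ) ^ i * (l.choose (l - i)) * (-α ^ 2 / (nβ * (nβ + 1))) ^ i / (Nat.factorial i : ℝ)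
      have hneg : (-1 : ℝ) ^ i * (-α ^ 2 / (nβ * (nβ + 1))) ^ i = (α ^ 2 / (nβ * (nβ + 1))) ^ i := by
        rw [← mul_pow]; congr 1; field_simp
      rw [mul_comm ((-1:ℝ)^i) _, mul_assoc, hneg]
  have hval1 : α ^ 2 / (nβ * (nβ + 1)) * (nβ / (nβ + 1) * (1 + 1 / (α + nβ)))
      / (1 - nβ / (nβ + 1) * (1 + 1 / (α + nβ))) = α ^ 2 / (nβ + 1) + α := by
    rw [hs1]; field_simp; ring
  have hval2 : Real.exp (-α ^ 2 / (nβ + 1)) / (nβ + 1)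
      / (1 - nβ / (nβ + 1) * (1 + 1 / (α + nβ)))
      = ((α + nβ) / α) * Real.exp (-α ^ 2 / (nβ + 1)) := by
    rw [hs1]; field_simp
  rw [hval1, hval2, hfe] at h
  have hexp : ((α + nβ) / α) * Real.exp (-α ^ 2 / (nβ + 1)) * Real.exp (α ^ 2 / (nβ + 1) + α)
      = ((α + nβ) / α) * Real.exp α := by
    rw [mul_assoc, ← Real.exp_add]
    congr 2
    ring
  rw [hexp] at h
  exact h

lemma chernoff_bound (nβ : ℝ) (hn : 0 < nβ) (α : ℝ) (hα : 0 < α) (T : ℝ) (hT : 0 ≤ T) :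
    ∑' l : ℕ, (if T ≤ (l : ℝ) then rhoDiag nβ α l else 0)
      ≤ ((α + nβ) / α) * Real.exp (α - T * Real.log (1 + 1 / (α + nβ))) := by
  have han : (0:ℝ) < α + nβ := by linarith
  set x : ℝ := 1 + 1 / (α + nβ) with hxdef
  have hx0 : 0 < x := by positivity
  have hx1 : 1 ≤ x := by rw [hxdef]; nlinarith [one_div_pos.mpr han]
  have hlog : 0 ≤ Real.log x := Real.log_nonneg hx1
  have hM := hasSum_rho_mul nβ α hn hα
  set E : ℝ := Real.exp (-(T * Real.log x)) with hEdef
  have hE0 : 0 < E := Real.exp_pos _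
  have hg : HasSum (fun l : ℕ => rhoDiag nβ α l * x ^ l * E)
      (((α + nβ) / α) * Real.exp α * E) := hM.mul_right E
  have key : ∀ l : ℕ, (if T ≤ (l : ℝ) then rhoDiag nβ α l else 0)
      ≤ rhoDiag nβ α l * x ^ l * E := by
    intro l
    have hρ := rhoDiag_nonneg nβ α hn l
    by_cases h : T ≤ (l : ℝ)
    · rw [if_pos h]
      have hxe : x ^ l * E = Real.exp (Real.log x * l - T * Real.log x) := by
        rw [← Real.rpow_natCast x l, Real.rpow_def_of_pos hx0, hEdef, ← Real.exp_add]
        ring_nf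
      have h1 : (1:ℝ) ≤ x ^ l * E := by
        rw [hxe]
        have : (0:ℝ) ≤ Real.log x * l - T * Real.log x := by
          have : Real.log x * l - T * Real.log x = ((l : ℝ) - T) * Real.log x := by ring
          rw [this]
          exact mul_nonneg (by linarith) hlog
        calc (1:ℝ) = Real.exp 0 := Real.exp_zero.symm
          _ ≤ _ := Real.exp_le_exp.mpr this
      calc rhoDiag nβ α l = rhoDiag nβ α l * 1 := (mul_one _).symm
        _ ≤ rhoDiag nβ α l * (x ^ l * E) := mul_le_mul_of_nonneg_left h1 hρ
        _ = rhoDiag nβ α l * x ^ l * E := by ring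
    · rw [if_neg h]
      have : (0:ℝ) ≤ x ^ l := by positivity
      exact mul_nonneg (mul_nonneg hρ this) hE0.le
  have hnn : ∀ l : ℕ, 0 ≤ (if T ≤ (l : ℝ) then rhoDiag nβ α l else 0) := by
    intro l
    split
    · exact rhoDiag_nonneg nβ α hn l
    · exact le_refl 0
  have hle := Summable.tsum_le_tsum key (Summable.of_nonneg_of_le hnn key hg.summable) hg.summable
  rw [hg.tsum_eq] at hle
  calc ∑' l : ℕ, (if T ≤ (l : ℝ) then rhoDiag nβ α l else 0)
      ≤ ((α + nβ) / α) * Real.exp α * E := hle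
    _ = ((α + nβ) / α) * Real.exp (α - T * Real.log x) := by
        rw [hEdef, mul_assoc, ← Real.exp_add]
        ring_nf

lemma aux_half : Tendsto (fun u : ℝ => u - u ^ 2 * Real.log (1 + 1 / u)) atTop (𝓝 (1 / 2)) := by
  rw [← tendsto_sub_nhds_zero_iff]
  apply squeeze_zero_norm' (a := fun u : ℝ => 1 / (u - 1))
  · filter_upwards [eventually_ge_atTop (2 : ℝ)] with u hu
    have hu0 : (0 : ℝ) < u := by linarith
    have hune : u ≠ 0 := ne_of_gt hu0
    have hum : u - 1 ≠ 0 := by intro h; nlinarith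
    have h1 : |(-(1 / u))| < 1 := by
      rw [abs_neg, abs_of_pos (by positivity), div_lt_one hu0]; linarith
    have key := Real.abs_log_sub_add_sum_range_le h1 2
    simp only [Finset.sum_range_succ, Finset.sum_range_zero] at key
    have habs : |(-(1 / u))| = 1 / u := by
      rw [abs_neg, abs_of_pos (by positivity)]
    rw [habs, show (1 : ℝ) - -(1 / u) = 1 + 1 / u from by ring] at key
    have harg : (0:ℝ) + (-(1/u)) ^ (0+1) / ((0:ℕ)+1) + (-(1/u)) ^ (1+1) / ((1:ℕ)+1)
        = -(1/u) + 1/(2*u^2) := by push_cast; field_simp; ring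
    rw [harg] at key
    have key2 : |Real.log (1 + 1 / u) - 1 / u + 1 / (2 * u ^ 2)| ≤ 1 / (u ^ 2 * (u - 1)) := by
      calc |Real.log (1 + 1 / u) - 1 / u + 1 / (2 * u ^ 2)|
          = |(-(1/u) + 1/(2*u^2)) + Real.log (1 + 1/u)| := by ring_nf
        _ ≤ (1 / u) ^ (2+1) / (1 - 1 / u) := key
        _ = 1 / (u ^ 2 * (u - 1)) := by
            have hs : ((1:ℝ) - 1/u) ≠ 0 := by
              have : (0:ℝ) < 1 - 1/u := by
                rw [sub_pos, div_lt_one hu0]; linarith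
              exact ne_of_gt this
            rw [div_pow, one_pow]
            field_simp
    have hrw : u - u ^ 2 * Real.log (1 + 1 / u) - 1 / 2
        = -(u ^ 2 * (Real.log (1 + 1 / u) - 1 / u + 1 / (2 * u ^ 2))) := by
      field_simp; ring
    rw [Real.norm_eq_abs, hrw, abs_neg, abs_mul,
      abs_of_pos (show (0:ℝ) < u ^ 2 by positivity)]
    calc u ^ 2 * |Real.log (1 + 1 / u) - 1 / u + 1 / (2 * u ^ 2)|
        ≤ u ^ 2 * (1 / (u ^ 2 * (u - 1))) := mul_le_mul_of_nonneg_left key2 (by positivity)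
      _ = 1 / (u - 1) := by field_simp
  · have : Tendsto (fun u : ℝ => u - 1) atTop atTop := tendsto_atTop_add_const_right _ _ tendsto_id
    simpa [one_div, Pi.inv_def] using this.inv_tendsto_atTop

lemma tendsto_bound (nβ : ℝ) (R c : ℝ) :
    Tendsto (fun α : ℝ => ((α + nβ) / α) *
      Real.exp (α - (α ^ 2 + R * c * α) * Real.log (1 + 1 / (α + nβ)))) atTop
      (𝓝 (Real.exp (nβ + 1 / 2 - c * R))) := by
  have hshift : Tendsto (fun α : ℝ => α + nβ) atTop atTop :=
    tendsto_atTop_add_const_right _ _ tendsto_id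
  have hinv : Tendsto (fun α : ℝ => 1 / (α + nβ)) atTop (𝓝 0) := by
    simpa [one_div, Pi.inv_def] using hshift.inv_tendsto_atTop
  have hLg0 : Tendsto (fun α : ℝ => Real.log (1 + 1 / (α + nβ))) atTop (𝓝 0) := by
    have h1 : Tendsto (fun α : ℝ => 1 + 1 / (α + nβ)) atTop (𝓝 1) := by
      simpa using tendsto_const_nhds.add hinv
    have := (Real.continuousAt_log (by norm_num : (1:ℝ) ≠ 0)).tendsto.comp h1
    simpa [Real.log_one, Function.comp_def] using this
  have h1 : Tendsto (fun α : ℝ => (α + nβ) * Real.log (1 + 1 / (α + nβ))) atTop (𝓝 1) :=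
    (Real.tendsto_mul_log_one_add_div_atTop 1).comp hshift
  have h3 : Tendsto (fun α : ℝ => (α + nβ) - (α + nβ) ^ 2 * Real.log (1 + 1 / (α + nβ)))
      atTop (𝓝 (1 / 2)) := aux_half.comp hshift
  have hαL : Tendsto (fun α : ℝ => α * Real.log (1 + 1 / (α + nβ))) atTop (𝓝 1) := by
    have h := h1.sub (hLg0.const_mul nβ)
    have heq : ∀ α : ℝ, (α + nβ) * Real.log (1 + 1 / (α + nβ))
        - nβ * Real.log (1 + 1 / (α + nβ)) = α * Real.log (1 + 1 / (α + nβ)) := by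
      intro α; ring
    have h' := h.congr heq
    simpa using h'
  have he2 : Tendsto (fun α : ℝ => α - α ^ 2 * Real.log (1 + 1 / (α + nβ)))
      atTop (𝓝 (nβ + 1 / 2)) := by
    have h := ((h3.add (h1.const_mul (2 * nβ))).sub (hLg0.const_mul (nβ ^ 2))).sub_const nβ
    have heq : ∀ α : ℝ, ((α + nβ) - (α + nβ) ^ 2 * Real.log (1 + 1 / (α + nβ))
        + 2 * nβ * ((α + nβ) * Real.log (1 + 1 / (α + nβ)))
        - nβ ^ 2 * Real.log (1 + 1 / (α + nβ))) - nβ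
        = α - α ^ 2 * Real.log (1 + 1 / (α + nβ)) := by
      intro α; ring
    have h' := h.congr heq
    have : (1 / 2 + 2 * nβ * 1 - nβ ^ 2 * 0) - nβ = nβ + 1 / 2 := by ring
    rwa [this] at h'
  have he : Tendsto (fun α : ℝ => α - (α ^ 2 + R * c * α) * Real.log (1 + 1 / (α + nβ)))
      atTop (𝓝 (nβ + 1 / 2 - c * R)) := by
    have h := he2.sub (hαL.const_mul (R * c))
    have heq : ∀ α : ℝ, (α - α ^ 2 * Real.log (1 + 1 / (α + nβ)))
        - R * c * (α * Real.log (1 + 1 / (α + nβ)))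
        = α - (α ^ 2 + R * c * α) * Real.log (1 + 1 / (α + nβ)) := by
      intro α; ring
    have h' := h.congr heq
    have : (nβ + 1 / 2) - R * c * 1 = nβ + 1 / 2 - c * R := by ring
    rwa [this] at h'
  have hpre : Tendsto (fun α : ℝ => (α + nβ) / α) atTop (𝓝 1) := by
    have h0 : Tendsto (fun α : ℝ => nβ / α) atTop (𝓝 0) :=
      tendsto_const_nhds.div_atTop tendsto_id
    have h' : Tendsto (fun α : ℝ => 1 + nβ / α) atTop (𝓝 1) := by
      simpa using (tendsto_const_nhds (x := (1:ℝ)) (f := atTop)).add h0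
    apply h'.congr'
    filter_upwards [eventually_gt_atTop (0:ℝ)] with α hα
    field_simp
  have := hpre.mul ((Real.continuous_exp.tendsto _).comp he)
  simpa using this

theorem coherent_thermal_chernoff (nβ : ℝ) (hn : 0 < nβ) :
    (∀ α : ℝ, 0 < α → ∀ T : ℝ, 0 ≤ T →
      ∑' l : ℕ, (if T ≤ (l : ℝ) then rhoDiag nβ α l else 0)
        ≤ ((α + nβ) / α) * Real.exp (α - T * Real.log (1 + 1 / (α + nβ))))
    ∧ ∀ R : ℝ, 0 < R →
        (fun α : ℝ => ∑' l : ℕ,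
            (if α ^ 2 + R * Real.sqrt (1 + 2 * nβ) * α ≤ (l : ℝ) then rhoDiag nβ α l else 0))
          =O[atTop]
          (fun _ : ℝ => Real.exp (nβ + 1 / 2 - Real.sqrt (1 + 2 * nβ) * R)) := by
  constructor
  · intro α hα T hT
    exact chernoff_bound nβ hn α hα T hT
  · intro R hR
    rw [Asymptotics.isBigO_iff]
    refine ⟨2, ?_⟩
    have hK : (0:ℝ) < Real.exp (nβ + 1 / 2 - Real.sqrt (1 + 2 * nβ) * R) := Real.exp_pos _
    have htend := tendsto_bound nβ R (Real.sqrt (1 + 2 * nβ))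
    have hlim : Real.sqrt (1 + 2 * nβ) * R = Real.sqrt (1 + 2 * nβ) * R := rfl
    have htend' : Tendsto (fun α : ℝ => ((α + nβ) / α) *
        Real.exp (α - (α ^ 2 + R * Real.sqrt (1 + 2 * nβ) * α) * Real.log (1 + 1 / (α + nβ))))
        atTop (𝓝 (Real.exp (nβ + 1 / 2 - Real.sqrt (1 + 2 * nβ) * R))) := htend
    have hev := htend'.eventually_lt_const
      (show Real.exp (nβ + 1 / 2 - Real.sqrt (1 + 2 * nβ) * R)
        < 2 * Real.exp (nβ + 1 / 2 - Real.sqrt (1 + 2 * nβ) * R) by linarith)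
    filter_upwards [hev, eventually_gt_atTop (0:ℝ)] with α hg hα0
    have hc : (0:ℝ) ≤ Real.sqrt (1 + 2 * nβ) := Real.sqrt_nonneg _
    have hT : (0:ℝ) ≤ α ^ 2 + R * Real.sqrt (1 + 2 * nβ) * α := by positivity
    have hb := chernoff_bound nβ hn α hα0 _ hT
    have hnn : (0:ℝ) ≤ ∑' l : ℕ,
        (if α ^ 2 + R * Real.sqrt (1 + 2 * nβ) * α ≤ (l : ℝ) then rhoDiag nβ α l else 0) :=
      tsum_nonneg (fun l => by
        by_cases h : α ^ 2 + R * Real.sqrt (1 + 2 * nβ) * α ≤ (l : ℝ)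
        · rw [if_pos h]; exact rhoDiag_nonneg nβ α hn l
        · rw [if_neg h])
    rw [Real.norm_eq_abs, Real.norm_eq_abs, abs_of_nonneg hnn, abs_of_nonneg hK.le]
    calc ∑' l : ℕ, (if α ^ 2 + R * Real.sqrt (1 + 2 * nβ) * α ≤ (l : ℝ) then rhoDiag nβ α l else 0)
        ≤ ((α + nβ) / α) * Real.exp
            (α - (α ^ 2 + R * Real.sqrt (1 + 2 * nβ) * α) * Real.log (1 + 1 / (α + nβ))) := hb
      _ ≤ 2 * Real.exp (nβ + 1 / 2 - Real.sqrt (1 + 2 * nβ) * R) := le_of_lt hg
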